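/- Let n be a natural number and write ℂⁿ for EuclideanSpace ℂ (Fin n), with star z denoting componentwise complex conjugation. Let g : ℂⁿ → ℂⁿ be holomorphic (Fréchet ℂ-differentiable everywhere) with the ℂ-linear derivative fderiv ℂ g z a linear isomorphism (bijective) at every point z, and define the antiholomorphic map σ : ℂⁿ → ℂⁿ by σ(z) = g(star z). Let ψ : ℂⁿ → ℝ be of class C² (ContDiff ℝ 2) and strictly plurisubharmonic in the Hessian sense: for every a ∈ ℂⁿ and every v ∈ ℂⁿ with v ≠ 0, the function t ↦ ψ(a + t • v) on ℂ has strictly positive Laplacian at 0. Then u = ψ ∘ σ is of class C² and is strictly plurisubharmonic in the same Hessian sense. -/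

import Mathlib

open Complex

/-- The Laplacian at `0` of a function `h : ℂ → ℝ`, computed from the second real
Fréchet derivative: `D²h(0)(1,1) + D²h(0)(i,i)`. -/
noncomputable def laplacianAtZero (h : ℂ → ℝ) : ℝ :=
  iteratedFDeriv ℝ 2 h 0 ![1, 1] + iteratedFDeriv ℝ 2 h 0 ![Complex.I, Complex.I]

/-- Componentwise complex conjugation on `ℂⁿ`. -/
def conjVec {n : ℕ} (z : EuclideanSpace ℂ (Fin n)) : EuclideanSpace ℂ (Fin n) :=
  WithLp.toLp 2 (fun i => starRingEnd ℂ (z i))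


section Auxiliary

open Metric intervalIntegral Real MeasureTheory
set_option maxHeartbeats 1000000

variable {E F : Type*} [NormedAddCommGroup E] [NormedSpace ℂ E]
  [NormedAddCommGroup F] [NormedSpace ℂ F]


section
variable [CompleteSpace F]

lemma hasDerivAt_line {G : E → F} (hG : Differentiable ℂ G) (z w : E) (t : ℂ) :
    HasDerivAt (fun l : ℂ => G (z + l • w)) (fderiv ℂ G (z + t • w) w) t := by
  have h1 : HasDerivAt (fun l : ℂ => z + l • w) w t := by
    simpa using ((hasDerivAt_id t).smul_const w).const_add z
  simpa [Function.comp_def] using (hG (z + t • w)).hasFDerivAt.comp_hasDerivAt t h1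

lemma norm_fderiv_le_of_sphere {G : E → F} (hG : Differentiable ℂ G) {y : E} {r C : ℝ}
    (hr : 0 < r) (hC : ∀ x ∈ sphere y r, ‖G x‖ ≤ C) (u : E) :
    ‖fderiv ℂ G y u‖ ≤ C * ‖u‖ / r := by
  rcases eq_or_ne u 0 with rfl | hu
  · simp [hr.le]
  have hu' : 0 < ‖u‖ := norm_pos_iff.mpr hu
  set R : ℝ := r / ‖u‖ with hR
  have hR0 : 0 < R := div_pos hr hu'
  have hd : ∀ t : ℂ, HasDerivAt (fun l : ℂ => G (y + l • u)) (fderiv ℂ G (y + t • u) u) t :=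
    hasDerivAt_line hG y u
  have hdiff : Differentiable ℂ fun l : ℂ => G (y + l • u) := fun t => (hd t).differentiableAt
  have key : ‖deriv (fun l : ℂ => G (y + l • u)) 0‖ ≤ C / R := by
    apply norm_deriv_le_of_forall_mem_sphere_norm_le hR0 hdiff.diffContOnCl
    intro l hl
    apply hC
    simp only [mem_sphere_iff_norm] at hl ⊢
    rw [sub_zero] at hl
    rw [add_sub_cancel_left, norm_smul, hl, hR]
    field_simp
  have h0 : deriv (fun l : ℂ => G (y + l • u)) 0 = fderiv ℂ G y u := by
    simpa using (hd 0).deriv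
  rw [h0] at key
  calc ‖fderiv ℂ G y u‖ ≤ C / R := key
    _ = C * ‖u‖ / r := by rw [hR]; field_simp

/-- Cauchy integral representation for the directional derivative. -/
lemma fderiv_apply_eq_integral {G : E → F} (hG : Differentiable ℂ G) (w z : E) :
    fderiv ℂ G z w = (2 * π * I : ℂ)⁻¹ • ∫ θ in (0:ℝ)..(2*π),
      deriv (circleMap 0 1) θ • (circleMap 0 1 θ) ^ (-2 : ℤ) •
        G (z + circleMap 0 1 θ • w) := by
  have hd := hasDerivAt_line hG z w
  have hdiff : Differentiable ℂ fun l : ℂ => G (z + l • w) := fun t => (hd t).differentiableAt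
  have h0 : deriv (fun l : ℂ => G (z + l • w)) 0 = fderiv ℂ G z w := by
    simpa using (hd 0).deriv
  have := hdiff.diffContOnCl.deriv_eq_smul_circleIntegral (c := 0) one_pos
  rw [h0] at this
  have hne : (2 * π * I : ℂ) ≠ 0 := by simp [Real.pi_ne_zero, I_ne_zero]
  rw [← inv_smul_smul₀ hne (fderiv ℂ G z w), ← this]
  unfold circleIntegral
  norm_num
end

variable [FiniteDimensional ℂ E] [FiniteDimensional ℂ F]

/-- The derivative of a holomorphic map on a finite-dimensional space is differentiable
in each direction. -/
lemma differentiableAt_fderiv_apply {G : E → F} (hG : Differentiable ℂ G) (w z₀ : E) :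
    DifferentiableAt ℂ (fun z => fderiv ℂ G z w) z₀ := by
  borelize E
  borelize (E →L[ℂ] F)
  obtain ⟨M, hM⟩ : ∃ M, ∀ x ∈ closedBall z₀ (2 + ‖w‖), ‖G x‖ ≤ M :=
    (isCompact_closedBall z₀ _).exists_bound_of_continuousOn hG.continuous.continuousOn
  have hM0 : 0 ≤ M := le_trans (norm_nonneg _) (hM z₀ (mem_closedBall_self (by positivity)))
  -- uniform bound on the derivative on `ball z₀ (1 + ‖w‖)`
  have hbd : ∀ y ∈ ball z₀ (1 + ‖w‖), ‖fderiv ℂ G y‖ ≤ M := by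
    intro y hy
    refine ContinuousLinearMap.opNorm_le_bound _ hM0 (fun u => ?_)
    have : ‖fderiv ℂ G y u‖ ≤ M * ‖u‖ / 1 := by
      refine norm_fderiv_le_of_sphere hG one_pos (fun x hx => ?_) u
      apply hM
      rw [mem_closedBall]
      calc dist x z₀ ≤ dist x y + dist y z₀ := dist_triangle _ _ _
        _ ≤ 1 + (1 + ‖w‖) := by
            refine add_le_add (le_of_eq (mem_sphere.mp hx)) (le_of_lt (mem_ball.mp hy))
        _ = 2 + ‖w‖ := by ring
    rw [div_one] at this
    exact this
  set m : ℝ → ℂ := circleMap 0 1 with hm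
  set F₀ : E → ℝ → F := fun x θ =>
    deriv (circleMap 0 1) θ • (m θ) ^ (-2 : ℤ) • G (x + m θ • w) with hF₀
  set F' : E → ℝ → E →L[ℂ] F := fun x θ =>
    deriv (circleMap 0 1) θ • (m θ) ^ (-2 : ℤ) • fderiv ℂ G (x + m θ • w) with hF'
  have hmne : ∀ θ, m θ ≠ 0 := fun θ => circleMap_ne_center one_ne_zero
  have hmabs : ∀ θ, ‖m θ‖ = 1 := fun θ => by
    simp [hm, norm_circleMap_zero]
  have hderivm : ∀ θ, ‖deriv (circleMap 0 1) θ‖ = 1 := fun θ => by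
    rw [deriv_circleMap]; simp [hmabs θ]
  have m1 : Continuous fun θ : ℝ => deriv (circleMap 0 1) θ := by
    have : (fun θ : ℝ => deriv (circleMap 0 1) θ) = fun θ : ℝ => circleMap 0 1 θ * I := by
      funext θ; exact deriv_circleMap 0 1 θ
    rw [this]; exact (continuous_circleMap 0 1).mul continuous_const
  have m2 : Continuous fun θ : ℝ => (m θ) ^ (-2 : ℤ) :=
    (continuous_circleMap 0 1).zpow₀ _ (fun θ => Or.inl (hmne θ))
  have hcont : ∀ x, Continuous (F₀ x) := by
    intro x
    exact m1.smul (m2.smul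
        (hG.continuous.comp (continuous_const.add ((continuous_circleMap 0 1).smul
          continuous_const))))
  have hdiffx : ∀ θ, ∀ x, HasFDerivAt (fun x => F₀ x θ) (F' x θ) x := by
    intro θ x
    apply HasFDerivAt.const_smul
    apply HasFDerivAt.const_smul
    have h1 : HasFDerivAt (fun x : E => x + m θ • w) (ContinuousLinearMap.id ℂ E) x := by
      simpa using (hasFDerivAt_id x).add_const (m θ • w)
    simpa [Function.comp_def] using (hG (x + m θ • w)).hasFDerivAt.comp x h1
  have hkey : HasFDerivAt (fun x => ∫ θ in (0:ℝ)..(2*π), F₀ x θ)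
      (∫ θ in (0:ℝ)..(2*π), F' z₀ θ) z₀ := by
    apply intervalIntegral.hasFDerivAt_integral_of_dominated_of_fderiv_le
      (s := ball z₀ 1) (bound := fun _ => M) (ball_mem_nhds z₀ one_pos)
    · exact Filter.Eventually.of_forall fun x => (hcont x).aestronglyMeasurable
    · exact (hcont z₀).intervalIntegrable 0 (2*π)
    · -- measurability of F' z₀
      have m3 : Measurable fun θ : ℝ => fderiv ℂ G (z₀ + m θ • w) :=
        (measurable_fderiv ℂ G).comp
          (continuous_const.add ((continuous_circleMap 0 1).smul continuous_const)).measurable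
      exact ((m1.stronglyMeasurable.smul
        (m2.stronglyMeasurable.smul m3.stronglyMeasurable))).aestronglyMeasurable
    · refine Filter.Eventually.of_forall fun θ _ x hx => ?_
      have hy : x + m θ • w ∈ ball z₀ (1 + ‖w‖) := by
        rw [mem_ball]
        calc dist (x + m θ • w) z₀ ≤ dist (x + m θ • w) x + dist x z₀ := dist_triangle _ _ _
          _ < ‖w‖ + 1 := by
              refine add_lt_add_of_le_of_lt ?_ (mem_ball.mp hx)
              rw [dist_eq_norm, add_sub_cancel_left, norm_smul, hmabs θ, one_mul]
          _ = 1 + ‖w‖ := by ring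
      refine ContinuousLinearMap.opNorm_le_bound _ hM0 fun u => ?_
      have happ : F' x θ u =
          deriv (circleMap 0 1) θ • (m θ) ^ (-2 : ℤ) • (fderiv ℂ G (x + m θ • w) u) := by
        simp [hF']
      rw [happ, norm_smul, norm_smul, hderivm θ, norm_zpow, hmabs θ]
      simp only [one_mul, one_zpow, inv_one]
      exact le_trans ((fderiv ℂ G (x + m θ • w)).le_opNorm u)
        (mul_le_mul_of_nonneg_right (hbd _ hy) (norm_nonneg _))
    · exact intervalIntegrable_const
    · exact Filter.Eventually.of_forall fun θ _ x _ => hdiffx θ x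
  have heq : (fun z => fderiv ℂ G z w) =
      fun z => (2 * π * I : ℂ)⁻¹ • ∫ θ in (0:ℝ)..(2*π), F₀ z θ := by
    funext z; exact fderiv_apply_eq_integral hG w z
  rw [heq]
  exact (hkey.const_smul _).differentiableAt

/-- The derivative of a holomorphic map on a finite-dimensional space is differentiable. -/
lemma differentiable_fderiv_of_holomorphic {G : E → F} (hG : Differentiable ℂ G) :
    Differentiable ℂ (fderiv ℂ G) := by
  classical
  let b := Module.finBasis ℂ E
  have hrep : (fderiv ℂ G) = fun z => ∑ j, ContinuousLinearMap.smulRightL ℂ E F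
      ((b.coord j).toContinuousLinearMap) (fderiv ℂ G z (b j)) := by
    funext z
    ext u
    rw [ContinuousLinearMap.sum_apply]
    have happ : ∀ j, (ContinuousLinearMap.smulRightL ℂ E F
        ((b.coord j).toContinuousLinearMap) (fderiv ℂ G z (b j))) u
        = b.repr u j • fderiv ℂ G z (b j) := fun j => rfl
    simp_rw [happ]
    conv_lhs => rw [← b.sum_repr u]
    rw [map_sum]
    exact Finset.sum_congr rfl fun j _ => _root_.map_smul _ _ _
  rw [hrep]
  apply Differentiable.fun_sum
  intro j _
  have hL : Differentiable ℂ (ContinuousLinearMap.smulRightL ℂ E F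
      ((b.coord j).toContinuousLinearMap)) :=
    ContinuousLinearMap.differentiable _
  exact hL.comp (fun z => differentiableAt_fderiv_apply hG (b j) z)

/-- A holomorphic map between finite-dimensional complex spaces is `C²` over `ℂ`. -/
lemma contDiff_two_of_holomorphic {G : E → F} (hG : Differentiable ℂ G) :
    ContDiff ℂ 2 G := by
  have h1 : Differentiable ℂ (fderiv ℂ G) := differentiable_fderiv_of_holomorphic hG
  have h2 : Differentiable ℂ (fderiv ℂ (fderiv ℂ G)) := differentiable_fderiv_of_holomorphic h1
  rw [show (2 : WithTop ℕ∞) = 1 + 1 from rfl, contDiff_succ_iff_fderiv]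
  refine ⟨hG, by simp, ?_⟩
  rw [contDiff_one_iff_fderiv]
  exact ⟨h1, h2.continuous⟩

section OneVariable

variable {E : Type*} [NormedAddCommGroup E] [NormedSpace ℂ E]


lemma fderiv_real_eq_smul_deriv {f : ℂ → E} (hf : Differentiable ℂ f) (t e : ℂ) :
    fderiv ℝ f t e = e • deriv f t := by
  rw [(hf t).fderiv_restrictScalars ℝ]
  have : fderiv ℂ f t e = fderiv ℂ f t (e • (1:ℂ)) := by rw [smul_eq_mul, mul_one]
  rw [ContinuousLinearMap.coe_restrictScalars', this, _root_.map_smul]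
  rw [fderiv_apply_one_eq_deriv]

lemma second_fderiv_comp {f : ℂ → E} (hf : ContDiff ℝ 2 f) {ψ : E → ℝ} (hψ : ContDiff ℝ 2 ψ)
    (e e' : ℂ) :
    fderiv ℝ (fderiv ℝ (fun t => ψ (f t))) 0 e e' =
      fderiv ℝ (fderiv ℝ ψ) (f 0) (fderiv ℝ f 0 e) (fderiv ℝ f 0 e')
        + fderiv ℝ ψ (f 0) (fderiv ℝ (fderiv ℝ f) 0 e e') := by
  have hψ1 : ContDiff ℝ 1 (fderiv ℝ ψ) := hψ.fderiv_right (le_refl _)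
  have hf1 : ContDiff ℝ 1 (fderiv ℝ f) := hf.fderiv_right (le_refl _)
  have hψd := hψ.differentiable (by norm_num)
  have hfd := hf.differentiable (by norm_num)
  have hcomp : fderiv ℝ (fun t => ψ (f t)) = fun t => (fderiv ℝ ψ (f t)).comp (fderiv ℝ f t) :=
    funext fun t => fderiv_comp t (hψd (f t)) (hfd t)
  have hc : HasFDerivAt (fun t => fderiv ℝ ψ (f t))
      ((fderiv ℝ (fderiv ℝ ψ) (f 0)).comp (fderiv ℝ f 0)) 0 :=
    ((hψ1.differentiable one_ne_zero (f 0)).hasFDerivAt).comp 0 (hfd 0).hasFDerivAt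
  have hd : HasFDerivAt (fun t => fderiv ℝ f t) (fderiv ℝ (fderiv ℝ f) 0) 0 :=
    (hf1.differentiable one_ne_zero 0).hasFDerivAt
  have hmain := hc.clm_comp hd
  rw [hcomp]
  rw [hmain.fderiv]
  simp [ContinuousLinearMap.add_apply, ContinuousLinearMap.comp_apply]
  ring

variable [FiniteDimensional ℂ E]

lemma second_fderiv_real_of_holomorphic {f : ℂ → E} (hf : Differentiable ℂ f) (e e' : ℂ) :
    fderiv ℝ (fderiv ℝ f) 0 e e' = e' • e • deriv (deriv f) 0 := by
  have hFD : FiniteDimensional ℝ E := Module.Finite.trans ℂ E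
  let A : E →ₗ[ℝ] (ℂ →L[ℝ] E) :=
    { toFun := fun v => ((ContinuousLinearMap.id ℂ ℂ).smulRight v).restrictScalars ℝ
      map_add' := fun v w => by ext t; exact smul_add t v w
      map_smul' := fun r v => by ext t; exact smul_comm t r v }
  let ACL := LinearMap.toContinuousLinearMap A
  have hder : Differentiable ℂ (deriv f) := by
    have h1 : Differentiable ℂ (fderiv ℂ f) := differentiable_fderiv_of_holomorphic hf
    have : deriv f = fun t => (ContinuousLinearMap.apply ℂ E (1:ℂ)) (fderiv ℂ f t) := by
      funext t; simp [ContinuousLinearMap.apply_apply, fderiv_apply_one_eq_deriv]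
    rw [this]
    exact (ContinuousLinearMap.apply ℂ E (1:ℂ)).differentiable.comp h1
  have hA : fderiv ℝ f = fun t => ACL (deriv f t) := by
    funext t
    ext s
    rw [fderiv_real_eq_smul_deriv hf t s]
    rfl
  have hstep : HasFDerivAt (fderiv ℝ f) (ACL.comp (fderiv ℝ (deriv f) 0)) 0 := by
    rw [hA]
    exact ACL.hasFDerivAt.comp 0 ((hder 0).restrictScalars ℝ).hasFDerivAt
  rw [hstep.fderiv]
  have : fderiv ℝ (deriv f) 0 e = e • deriv (deriv f) 0 :=
    fderiv_real_eq_smul_deriv hder 0 e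
  rw [ContinuousLinearMap.comp_apply, this]
  rfl

/-- The Laplacian of `ψ` composed with a holomorphic curve agrees with the Laplacian of `ψ`
along the tangent line. -/
lemma laplacianAtZero_comp_holomorphic {f : ℂ → E} (hf : Differentiable ℂ f)
    {ψ : E → ℝ} (hψ : ContDiff ℝ 2 ψ) :
    laplacianAtZero (fun t => ψ (f t)) =
      laplacianAtZero (fun t => ψ (f 0 + t • deriv f 0)) := by
  set w' := deriv f 0 with hw'
  have hfC2 : ContDiff ℝ 2 f := (contDiff_two_of_holomorphic hf).restrict_scalars ℝ
  set S : ℂ →L[ℝ] E := ((ContinuousLinearMap.id ℂ ℂ).smulRight w').restrictScalars ℝ with hS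
  have hSapp : ∀ e : ℂ, S e = e • w' := fun e => rfl
  set q : ℂ → E := fun t => f 0 + S t with hqdef
  have hq : ∀ t, HasFDerivAt q S t := fun t => (S.hasFDerivAt).const_add (f 0)
  have hqC2 : ContDiff ℝ 2 q := contDiff_const.add S.contDiff
  have hqf : ∀ t, fderiv ℝ q t = S := fun t => (hq t).fderiv
  have hq2 : fderiv ℝ (fderiv ℝ q) 0 = 0 := by
    have h : fderiv ℝ q = fun _ : ℂ => S := funext hqf
    rw [h]
    exact fderiv_const_apply S
  have hq0 : q 0 = f 0 := by
    rw [hqdef]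
    simp [hSapp]
  have hgoal : (fun t => ψ (f 0 + t • w')) = fun t => ψ (q t) := rfl
  rw [hgoal]
  have hDf : ∀ e : ℂ, fderiv ℝ f 0 e = e • w' := fun e => fderiv_real_eq_smul_deriv hf 0 e
  have hD2f : ∀ e e' : ℂ, fderiv ℝ (fderiv ℝ f) 0 e e' = e' • e • deriv (deriv f) 0 :=
    second_fderiv_real_of_holomorphic hf
  unfold laplacianAtZero
  rw [iteratedFDeriv_two_apply, iteratedFDeriv_two_apply, iteratedFDeriv_two_apply,
    iteratedFDeriv_two_apply]
  simp only [Matrix.cons_val_zero, Matrix.cons_val_one, Matrix.head_cons]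
  rw [second_fderiv_comp hfC2 hψ, second_fderiv_comp hfC2 hψ,
    second_fderiv_comp hqC2 hψ, second_fderiv_comp hqC2 hψ]
  rw [hq0, hqf, hq2, hDf, hDf, hD2f, hD2f]
  simp only [ContinuousLinearMap.zero_apply, map_zero, add_zero]
  rw [hSapp, hSapp]
  rw [smul_smul, smul_smul, I_mul_I, one_mul, one_smul, neg_one_smul, map_neg]
  rw [one_smul]
  ring

/-- Precomposition with complex conjugation preserves the Laplacian at `0`. -/
lemma laplacianAtZero_comp_conj {u : ℂ → ℝ} (hu : ContDiff ℝ 2 u) :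
    laplacianAtZero (fun t => u (starRingEnd ℂ t)) = laplacianAtZero u := by
  set c : ℂ →L[ℝ] ℂ := Complex.conjCLE.toContinuousLinearMap with hc
  have hfun : (fun t => u (starRingEnd ℂ t)) = u ∘ c := rfl
  have h2 := c.iteratedFDeriv_comp_right hu (0:ℂ) (i := 2) (by norm_num)
  have hc0 : c (0:ℂ) = 0 := map_zero c
  unfold laplacianAtZero
  rw [hfun, h2, hc0]
  rw [ContinuousMultilinearMap.compContinuousLinearMap_apply,
    ContinuousMultilinearMap.compContinuousLinearMap_apply]
  have e1 : (fun i : Fin 2 => c (![1, 1] i)) = ![(1:ℂ), 1] := by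
    funext i; fin_cases i <;> simp [hc]
  have e2 : (fun i : Fin 2 => c (![Complex.I, Complex.I] i)) =
      fun i : Fin 2 => (-1:ℝ) • (![Complex.I, Complex.I] i) := by
    funext i; fin_cases i <;> simp [hc, Complex.conj_I]
  rw [e1, e2, ContinuousMultilinearMap.map_smul_univ]
  norm_num

end OneVariable

end Auxiliary

/-- If `ψ` is a `C²` strictly plurisubharmonic function (in the Hessian/Laplacian sense)
on `ℂⁿ` and `σ(z) = g(star z)` is antiholomorphic with invertible derivative (with `g`
holomorphic, `fderiv ℂ g z` bijective everywhere), then `ψ ∘ σ` is `C²` and strictly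
plurisubharmonic. -/
theorem strictPsh_comp_antiholomorphic (n : ℕ)
    (g : EuclideanSpace ℂ (Fin n) → EuclideanSpace ℂ (Fin n))
    (hg : ∀ z, DifferentiableAt ℂ g z)
    (hg' : ∀ z, Function.Bijective (fderiv ℂ g z))
    (σ : EuclideanSpace ℂ (Fin n) → EuclideanSpace ℂ (Fin n))
    (hσ : ∀ z, σ z = g (conjVec z))
    (ψ : EuclideanSpace ℂ (Fin n) → ℝ) (hψ : ContDiff ℝ 2 ψ)
    (hpsh : ∀ a : EuclideanSpace ℂ (Fin n), ∀ v : EuclideanSpace ℂ (Fin n), v ≠ 0 →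
      0 < laplacianAtZero fun t : ℂ => ψ (a + t • v)) :
    ContDiff ℝ 2 (ψ ∘ σ) ∧
      ∀ a : EuclideanSpace ℂ (Fin n), ∀ v : EuclideanSpace ℂ (Fin n), v ≠ 0 →
        0 < laplacianAtZero fun t : ℂ => (ψ ∘ σ) (a + t • v) := by
  have hgdiff : Differentiable ℂ g := hg
  have hgC2 : ContDiff ℝ 2 g := (contDiff_two_of_holomorphic hgdiff).restrict_scalars ℝ
  -- conjugation as a continuous linear map
  let cLIE := LinearIsometryEquiv.piLpCongrRight 2 (fun _ : Fin n => Complex.conjLIE)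
  let cCLM : EuclideanSpace ℂ (Fin n) →L[ℝ] EuclideanSpace ℂ (Fin n) :=
    cLIE.toContinuousLinearEquiv.toContinuousLinearMap
  have hcvec : (conjVec (n := n)) = cCLM := funext fun _ => rfl
  have hσC2 : ContDiff ℝ 2 σ := by
    have hσeq : σ = g ∘ cCLM := funext fun z => by rw [hσ z, hcvec]; rfl
    rw [hσeq]
    exact hgC2.comp cCLM.contDiff
  refine ⟨hψ.comp hσC2, ?_⟩
  intro a v hv
  set b := conjVec a with hb
  set w := conjVec v with hwdef
  have hw : w ≠ 0 := by
    intro hcon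
    apply hv
    ext i
    have : starRingEnd ℂ (v i) = 0 := by simpa [hwdef, conjVec] using congrArg (fun x => x i) hcon
    simpa using congrArg (starRingEnd ℂ) this
  set h : ℂ → EuclideanSpace ℂ (Fin n) := fun s => g (b + s • w) with hhdef
  have hh : ∀ t, HasDerivAt h (fderiv ℂ g (b + t • w) w) t := hasDerivAt_line hgdiff b w
  have hhdiff : Differentiable ℂ h := fun t => (hh t).differentiableAt
  have hw' : deriv h 0 = fderiv ℂ g b w := by simpa using (hh 0).deriv
  have hw'0 : deriv h 0 ≠ 0 := by
    rw [hw']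
    intro hcon
    exact hw ((hg' b).injective (by rw [hcon, map_zero]))
  have hC2h : ContDiff ℝ 2 (fun t => ψ (h t)) :=
    hψ.comp ((contDiff_two_of_holomorphic hhdiff).restrict_scalars ℝ)
  have key2 : (fun t : ℂ => (ψ ∘ σ) (a + t • v))
      = fun t => (fun s => ψ (h s)) (starRingEnd ℂ t) := by
    funext t
    simp only [Function.comp_apply, hσ]
    have harg : conjVec (a + t • v) = b + (starRingEnd ℂ) t • w := by
      ext i
      simp [conjVec, hb, hwdef, smul_eq_mul]
    rw [harg]
  rw [key2, laplacianAtZero_comp_conj hC2h, laplacianAtZero_comp_holomorphic hhdiff hψ]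
  exact hpsh (h 0) (deriv h 0) hw'0
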